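/- Let p be a prime, k an algebraically closed field of characteristic p, m ≥ 1, and A an m×m matrix over 𝕎 k. Then the map from (𝕎 k)^m to itself sending v to v − A·σ(v), where σ(v) is the vector obtained by applying frobenius to each entry of v and A·(−) is matrix–vector multiplication, is surjective. -/

import Mathlib

open Polynomial Finset
set_option maxHeartbeats 1000000

section Residue
variable (p : ℕ) [Fact p.Prime] (k : Type) [Field k] [IsAlgClosed k] [CharP k p]

/-- The semilinear "twisted" operator `x ↦ B ⬝ x^{(p)}`. -/
noncomputable def Tmap (m : ℕ) (B : Matrix (Fin m) (Fin m) k) :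
    (Fin m → k) →ₛₗ[frobenius k p] (Fin m → k) where
  toFun x := B.mulVec fun i => x i ^ p
  map_add' x y := by
    show B.mulVec (fun i => (x + y) i ^ p) =
      B.mulVec (fun i => x i ^ p) + B.mulVec (fun i => y i ^ p)
    have : (fun i => (x + y) i ^ p) = (fun i => x i ^ p) + fun i => y i ^ p := by
      funext i; simp [add_pow_char]
    rw [this, Matrix.mulVec_add]
  map_smul' a x := by
    show B.mulVec (fun i => (a • x) i ^ p) = frobenius k p a • B.mulVec (fun i => x i ^ p)
    have : (fun i => (a • x) i ^ p) = a ^ p • fun i => x i ^ p := by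
      funext i; simp [mul_pow]
    rw [this, Matrix.mulVec_smul]; rfl

theorem residue_solve (m : ℕ) (B : Matrix (Fin m) (Fin m) k) (c : Fin m → k) :
    ∃ x : Fin m → k, x - B.mulVec (fun i => x i ^ p) = c := by
  have hp1 : 1 < p := (Fact.out : p.Prime).one_lt
  classical
  by_cases hc : c = 0
  · refine ⟨0, ?_⟩
    have h0 : (fun i => (0 : Fin m → k) i ^ p) = 0 := by
      funext i; simp [zero_pow (Fact.out : p.Prime).ne_zero]
    rw [h0, Matrix.mulVec_zero, hc, sub_zero]
  set T := Tmap p k m B with hT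
  set e : ℕ → (Fin m → k) := fun n => (⇑T)^[n] c with he
  -- linear dependence of `e 0, ..., e m`
  have hdep : ¬ LinearIndependent k (fun i : Fin (m + 1) => e i) := by
    intro h
    have := h.fintype_card_le_finrank
    rw [Module.finrank_fin_fun, Fintype.card_fin] at this
    omega
  rw [Fintype.not_linearIndependent_iff] at hdep
  obtain ⟨g, hgsum, i₀, hi₀⟩ := hdep
  set g' : ℕ → k := fun n => if h : n < m + 1 then g ⟨n, h⟩ else 0 with hg'
  have hg'sum : ∑ i ∈ range (m + 1), g' i • e i = 0 := by
    rw [Finset.sum_range fun i => g' i • e i] at *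
    convert hgsum using 2 with i
    simp [hg', i.2]
    intro h
    exact absurd h (by have := i.2; omega)
  set j := Nat.findGreatest (fun n => g' n ≠ 0) m with hj
  have hPi₀ : g' i₀.val ≠ 0 := by simpa [hg', i₀.2, Nat.lt_succ_iff.mp i₀.2] using hi₀
  have hgj : g' j ≠ 0 := Nat.findGreatest_spec (P := fun n => g' n ≠ 0) (Nat.lt_succ_iff.mp i₀.2) hPi₀
  have hjtop : ∀ n, j < n → g' n = 0 := by
    intro n hn
    by_cases hnm : n ≤ m
    · by_contra hne
      exact absurd (Nat.le_findGreatest (P := fun n => g' n ≠ 0) hnm hne) (not_le.mpr hn)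
    · simp [hg', dif_neg]; intro h; omega
  -- the relation e j = ∑_{i<j} b i • e i
  set b : ℕ → k := fun i => -(g' i) / g' j with hb
  have hrel : e j = ∑ i ∈ range j, b i • e i := by
    have hsum' : ∑ i ∈ range (j + 1), g' i • e i = 0 := by
      rw [← hg'sum]
      apply Finset.sum_subset
      · intro x hx
        simp only [Finset.mem_range] at *
        have : j ≤ m := Nat.findGreatest_le m
        omega
      · intro x _ hx
        simp only [Finset.mem_range, not_lt] at hx
        rw [hjtop x (by omega), zero_smul]
    rw [Finset.sum_range_succ] at hsum'
    have : g' j • e j = - ∑ i ∈ range j, g' i • e i := by linear_combination (norm := module) hsum'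
    have h2 := congrArg (fun z => (g' j)⁻¹ • z) this
    simp only [smul_smul, inv_mul_cancel₀ hgj, one_smul, smul_neg, Finset.smul_sum] at h2
    rw [h2, ← Finset.sum_neg_distrib]
    apply Finset.sum_congr rfl
    intro i _
    rw [← neg_smul, hb]
    congr 1
    field_simp
  -- j ≥ 1
  obtain ⟨d, hd⟩ : ∃ d, j = d + 1 := by
    rcases Nat.eq_zero_or_pos j with h0 | h
    · exact absurd (by rw [h0] at hrel; simpa [he] using hrel) hc
    · exact ⟨j - 1, by omega⟩
  -- the polynomial chain
  set q : ℕ → Polynomial k := fun n => Nat.rec (C (b 0) * X ^ p + 1)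
    (fun n qn => qn ^ p + C (b (n + 1)) * X ^ p) n with hq
  have hq0 : q 0 = C (b 0) * X ^ p + 1 := rfl
  have hqs : ∀ n, q (n + 1) = q n ^ p + C (b (n + 1)) * X ^ p := fun n => rfl
  have hcoeff1 : ∀ n, (q n).coeff 1 = 0 := by
    intro n
    induction n with
    | zero =>
      rw [hq0, Polynomial.coeff_add, Polynomial.coeff_C_mul, Polynomial.coeff_X_pow,
        if_neg (by omega : ¬ (1 = p)), Polynomial.coeff_one, if_neg (by omega : ¬ (1:ℕ) = 0)]
      ring
    | succ n ih =>
      rw [hqs, Polynomial.coeff_add]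
      have h1 : (q n ^ p).coeff 1 = 0 := by
        rw [← Polynomial.map_frobenius_expand, Polynomial.coeff_map,
          Polynomial.coeff_expand (by omega : 0 < p),
          if_neg (by rw [Nat.dvd_one]; omega : ¬ p ∣ 1), map_zero]
      rw [h1, Polynomial.coeff_C_mul, Polynomial.coeff_X_pow,
        if_neg (by omega : ¬ (1 = p))]
      ring
  set P : Polynomial k := q d - X with hP
  have hPc : P.coeff 1 = -1 := by
    rw [hP, Polynomial.coeff_sub, hcoeff1, Polynomial.coeff_X_one]; ring
  have hPd : P.degree ≠ 0 := by
    intro hdeg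
    have h1 : (1 : ℕ) ≤ P.natDegree :=
      Polynomial.le_natDegree_of_ne_zero (n := 1) (by rw [hPc]; norm_num)
    have h0 : P.natDegree = 0 :=
      Polynomial.natDegree_eq_zero_iff_degree_le_zero.mpr (le_of_eq hdeg)
    omega
  obtain ⟨t, ht⟩ := IsAlgClosed.exists_root P hPd
  have hroot : (q d).eval t = t := by
    have h := ht
    rw [hP, Polynomial.IsRoot, Polynomial.eval_sub, Polynomial.eval_X] at h
    exact sub_eq_zero.mp h
  set a : ℕ → k := fun n => (q n).eval t with ha
  have ha0 : a 0 = 1 + b 0 * t ^ p := by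
    rw [ha]; simp only [hq0, Polynomial.eval_add, Polynomial.eval_mul, Polynomial.eval_C,
      Polynomial.eval_pow, Polynomial.eval_X, Polynomial.eval_one]; ring
  have has : ∀ n, a (n + 1) = a n ^ p + b (n + 1) * t ^ p := by
    intro n
    rw [ha]; simp only [hqs, Polynomial.eval_add, Polynomial.eval_mul, Polynomial.eval_C,
      Polynomial.eval_pow, Polynomial.eval_X]
  have had : a d = t := hroot
  have hTe : ∀ n, T (e n) = e (n + 1) := by
    intro n
    rw [he]
    simp only
    rw [Function.iterate_succ_apply']
  have hTx : T (∑ i ∈ range (d + 1), a i • e i)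
      = (∑ i ∈ range d, (a i ^ p) • e (i + 1)) + t ^ p • ∑ i ∈ range (d + 1), b i • e i := by
    rw [map_sum]
    have hterm : ∀ i, T (a i • e i) = (a i ^ p) • e (i + 1) := by
      intro i
      rw [map_smulₛₗ, hTe, frobenius_def]
    simp only [hterm]
    rw [Finset.sum_range_succ, had]
    congr 1
    rw [show d + 1 = j from hd.symm, hrel, hd]
  have hsmul : ∀ i : ℕ, t ^ p • (b i • e i) = (b i * t ^ p) • e i := by
    intro i; rw [smul_smul, mul_comm]
  have hx : ∑ i ∈ range (d + 1), a i • e i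
      = e 0 + ((∑ i ∈ range d, (a i ^ p) • e (i + 1)) + t ^ p • ∑ i ∈ range (d + 1), b i • e i) := by
    conv_lhs => rw [Finset.sum_range_succ']
    simp only [has, ha0, add_smul, one_smul]
    rw [Finset.sum_add_distrib]
    conv_rhs => rw [Finset.smul_sum]
    simp only [hsmul]
    conv_rhs => rw [Finset.sum_range_succ']
    abel
  have hfin : (∑ i ∈ range (d + 1), a i • e i) - T (∑ i ∈ range (d + 1), a i • e i) = e 0 := by
    rw [hTx]
    conv_lhs => rw [hx]
    abel
  exact ⟨∑ i ∈ range (d + 1), a i • e i, hfin⟩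

end Residue

namespace Stmt4Aux

variable (p : ℕ) [Fact p.Prime] (k : Type) [Field k] [IsAlgClosed k] [CharP k p]

local notation "W" => WittVector p k

/-- coefficient-0 projection as a ring hom -/
noncomputable def pz : W →+* k where
  toFun x := x.coeff 0
  map_one' := WittVector.one_coeff_zero p k
  map_mul' := WittVector.mul_coeff_zero
  map_zero' := WittVector.zero_coeff p k 0
  map_add' := WittVector.add_coeff_zero

@[simp] theorem pz_apply (x : W) : pz p k x = x.coeff 0 := rfl

theorem exists_eq_p_mul (x : W) (hx : x.coeff 0 = 0) : ∃ y : W, x = p * y := by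
  set z : W := WittVector.mk p (fun n => x.coeff (n + 1)) with hz
  have hVz : WittVector.verschiebung z = x := by
    apply WittVector.ext
    intro n
    cases n with
    | zero => rw [WittVector.verschiebung_coeff_zero, hx]
    | succ n => rw [WittVector.verschiebung_coeff_succ]; simp [hz, WittVector.coeff_mk]
  refine ⟨(WittVector.frobeniusEquiv p k).symm z, ?_⟩
  have hF : WittVector.frobenius ((WittVector.frobeniusEquiv p k).symm z) = z :=
    (WittVector.frobeniusEquiv p k).apply_symm_apply z
  calc x = WittVector.verschiebung z := hVz.symm
    _ = WittVector.verschiebung (WittVector.frobenius ((WittVector.frobeniusEquiv p k).symm z)) := by rw [hF]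
    _ = ((WittVector.frobeniusEquiv p k).symm z) * p := WittVector.verschiebung_frobenius _
    _ = p * ((WittVector.frobeniusEquiv p k).symm z) := mul_comm _ _

theorem exists_eq_pow_mul (n : ℕ) (x : W) (hx : ∀ i < n, x.coeff i = 0) :
    ∃ y : W, x = (p : W) ^ n * y := by
  induction n generalizing x with
  | zero => exact ⟨x, by simp⟩
  | succ n ih =>
    obtain ⟨y, hy⟩ := exists_eq_p_mul p k x (hx 0 (by omega))
    have hyc : ∀ i < n, y.coeff i = 0 := by
      intro i hi
      have h2 : x.coeff (i + 1) = y.coeff i ^ p := by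
        rw [hy, mul_comm]
        exact WittVector.mul_charP_coeff_succ y i
      rw [hx (i + 1) (by omega)] at h2
      exact pow_eq_zero_iff (Fact.out : p.Prime).ne_zero |>.mp h2.symm
    obtain ⟨z, hz⟩ := ih y hyc
    exact ⟨z, by rw [hy, hz, pow_succ]; ring⟩

theorem pow_mul_coeff_eq_zero (n : ℕ) (y : W) : ∀ i < n, ((p : W) ^ n * y).coeff i = 0 := by
  induction n generalizing y with
  | zero => intro i hi; omega
  | succ n ih =>
    intro i hi
    have hre : (p : W) ^ (n + 1) * y = ((p : W) ^ n * y) * p := by ring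
    rw [hre]
    cases i with
    | zero => exact WittVector.mul_charP_coeff_zero _
    | succ i =>
      rw [WittVector.mul_charP_coeff_succ, ih y i (by omega)]
      exact zero_pow (Fact.out : p.Prime).ne_zero

/-- total version of `exists_eq_pow_mul` for use in recursions -/
theorem exists_eq_pow_mul' (n : ℕ) (x : W) :
    ∃ y : W, (∀ i < n, x.coeff i = 0) → x = (p : W) ^ n * y := by
  by_cases h : ∀ i < n, x.coeff i = 0
  · exact (exists_eq_pow_mul p k n x h).imp fun y hy _ => hy
  · exact ⟨0, fun h' => absurd h' h⟩

noncomputable def divp (n : ℕ) (x : W) : W :=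
  Classical.choose (exists_eq_pow_mul' p k n x)

theorem divp_spec (n : ℕ) (x : W) (hx : ∀ i < n, x.coeff i = 0) :
    x = (p : W) ^ n * divp p k n x :=
  Classical.choose_spec (exists_eq_pow_mul' p k n x) hx

variable (m : ℕ) (A : Matrix (Fin m) (Fin m) (WittVector p k))

/-- the affine semilinear operator -/
noncomputable def Lop (v : Fin m → W) : Fin m → W :=
  v - A.mulVec fun i => WittVector.frobenius (v i)

theorem mulVec_eq_sum (f : Fin m → W) (i : Fin m) : A.mulVec f i = ∑ j, A i j * f j := by
  simp [Matrix.mulVec, dotProduct]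

theorem Lop_add (x y : Fin m → W) :
    Lop p k m A (x + y) = Lop p k m A x + Lop p k m A y := by
  unfold Lop
  have h : (fun i => WittVector.frobenius ((x + y) i)) =
      (fun i => WittVector.frobenius (x i)) + fun i => WittVector.frobenius (y i) := by
    funext i; simp
  rw [h, Matrix.mulVec_add]
  abel

theorem Lop_pmul (n : ℕ) (u : Fin m → W) :
    Lop p k m A (fun i => (p : W) ^ n * u i) = fun i => (p : W) ^ n * Lop p k m A u i := by
  funext i
  unfold Lop
  simp only [Pi.sub_apply]
  have hfr : (fun j => WittVector.frobenius ((p : W) ^ n * u j)) =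
      (p : W) ^ n • fun j => WittVector.frobenius (u j) := by
    funext j
    rw [map_mul, map_pow, map_natCast]
    rfl
  rw [hfr, Matrix.mulVec_smul]
  simp only [Pi.smul_apply, smul_eq_mul]
  ring

theorem witt_res_solve (c : Fin m → W) :
    ∃ u : Fin m → W, ∀ i, (Lop p k m A u i - c i).coeff 0 = 0 := by
  obtain ⟨x, hx⟩ := residue_solve p k m (fun i j => (A i j).coeff 0) (fun i => (c i).coeff 0)
  set u : Fin m → W := fun i => WittVector.mk p (fun n => if n = 0 then x i else 0) with hu
  have hcoe : ∀ i, (u i).coeff 0 = x i := by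
    intro i; rw [hu]; simp [WittVector.coeff_mk]
  refine ⟨u, fun i => ?_⟩
  have hmv : (A.mulVec (fun j => WittVector.frobenius (u j)) i).coeff 0
      = ∑ j, (A i j).coeff 0 * x j ^ p := by
    rw [mulVec_eq_sum]
    calc (∑ j, A i j * WittVector.frobenius (u j)).coeff 0
        = pz p k (∑ j, A i j * WittVector.frobenius (u j)) := rfl
      _ = ∑ j, pz p k (A i j * WittVector.frobenius (u j)) := map_sum _ _ _
      _ = ∑ j, (A i j).coeff 0 * x j ^ p := by
          apply Finset.sum_congr rfl
          intro j _
          rw [map_mul, pz_apply, pz_apply, WittVector.coeff_frobenius_charP, hcoe]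
  have hLc : (Lop p k m A u i - c i).coeff 0
      = x i - (∑ j, (A i j).coeff 0 * x j ^ p) - (c i).coeff 0 := by
    unfold Lop
    simp only [Pi.sub_apply]
    calc ((u i - A.mulVec (fun j => WittVector.frobenius (u j)) i) - c i).coeff 0
        = pz p k ((u i - A.mulVec (fun j => WittVector.frobenius (u j)) i) - c i) := rfl
      _ = pz p k (u i) - pz p k (A.mulVec (fun j => WittVector.frobenius (u j)) i)
            - pz p k (c i) := by rw [map_sub, map_sub]
      _ = x i - (∑ j, (A i j).coeff 0 * x j ^ p) - (c i).coeff 0 := by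
          rw [pz_apply, pz_apply, pz_apply, hcoe, hmv]
  have hxi := congrFun hx i
  simp only [Pi.sub_apply] at hxi
  have hBx : Matrix.mulVec (fun i j => (A i j).coeff 0) (fun j => x j ^ p) i
      = ∑ j, (A i j).coeff 0 * x j ^ p := by
    simp [Matrix.mulVec, dotProduct]
  rw [hBx] at hxi
  rw [hLc, hxi, sub_self]

theorem add_coeff_of_low_zero (n : ℕ) (x z : W) (hz : ∀ i < n, z.coeff i = 0)
    (l : ℕ) (hl : l < n) : (x + z).coeff l = x.coeff l := by
  have hker : WittVector.truncate n z = 0 :=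
    RingHom.mem_ker.mp ((WittVector.mem_ker_truncate (n := n) z).mpr hz)
  have h1 : WittVector.truncate n (x + z) = WittVector.truncate n x := by
    rw [map_add, hker, add_zero]
  have h2 := congrArg (fun t => TruncatedWittVector.coeff (⟨l, hl⟩ : Fin n) t) h1
  simpa only [WittVector.coeff_truncate] using h2

theorem main_solve (b : Fin m → W) : ∃ v : Fin m → W, Lop p k m A v = b := by
  classical
  choose sol hsol using witt_res_solve p k m A
  set step : ℕ → (Fin m → W) → (Fin m → W) := fun n vn =>
    vn + fun i => (p : W) ^ n *
      sol (fun i' => divp p k n ((b - Lop p k m A vn) i')) i with hstep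
  set v : ℕ → Fin m → W := fun n => Nat.rec (motive := fun _ => Fin m → W) 0 (fun n vn => step n vn) n with hvdef
  have hvs : ∀ n, v (n + 1) = step n (v n) := fun n => rfl
  -- error invariant
  have E : ∀ n i l, l < n → ((b - Lop p k m A (v n)) i).coeff l = 0 := by
    intro n
    induction n with
    | zero => intro i l hl; omega
    | succ n ih =>
      set cn : Fin m → W := fun i' => divp p k n ((b - Lop p k m A (v n)) i') with hcn
      have hcn' : ∀ i, (b - Lop p k m A (v n)) i = (p : W) ^ n * cn i := fun i =>
        divp_spec p k n _ (fun l hl => ih i l hl)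
      intro i l hl
      have hL : Lop p k m A (v (n + 1))
          = Lop p k m A (v n) + fun i => (p : W) ^ n * Lop p k m A (sol cn) i := by
        rw [hvs, hstep]
        simp only
        rw [Lop_add, Lop_pmul]
      have hdiff : (b - Lop p k m A (v (n + 1))) i
          = (p : W) ^ n * (cn i - Lop p k m A (sol cn) i) := by
        rw [hL]
        simp only [Pi.sub_apply, Pi.add_apply]
        rw [mul_sub]
        have := hcn' i
        simp only [Pi.sub_apply] at this
        rw [← this]
        ring
      have h0 : (cn i - Lop p k m A (sol cn) i).coeff 0 = 0 := by
        have h1 := hsol cn i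
        have hneg : cn i - Lop p k m A (sol cn) i = -(Lop p k m A (sol cn) i - cn i) := by ring
        rw [hneg, ← pz_apply, map_neg, pz_apply, h1, neg_zero]
      obtain ⟨y, hy⟩ := exists_eq_p_mul p k _ h0
      rw [hdiff, hy, show (p : W) ^ n * ((p : W) * y) = (p : W) ^ (n + 1) * y by ring]
      exact pow_mul_coeff_eq_zero p k (n + 1) y l hl
  -- coefficient stabilization
  have hstab : ∀ n i l, l < n → (v n i).coeff l = (v (l + 1) i).coeff l := by
    intro n
    induction n with
    | zero => intro i l hl; omega
    | succ n ih =>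
      intro i l hl
      rcases Nat.lt_or_ge l n with h | h
      · have hcoeq : (v (n + 1) i).coeff l = (v n i).coeff l := by
          rw [hvs, hstep]
          simp only [Pi.add_apply]
          exact add_coeff_of_low_zero p k n _ _
            (fun i' hi' => pow_mul_coeff_eq_zero p k n _ i' hi') l h
        rw [hcoeq]
        exact ih i l h
      · have : l = n := by omega
        subst this
        rfl
  set w : Fin m → W := fun i => WittVector.mk p (fun l => (v (l + 1) i).coeff l) with hw
  have hwv : ∀ n i l, l < n → (w i).coeff l = (v n i).coeff l := by
    intro n i l hl
    rw [hw]
    simp only [WittVector.coeff_mk]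
    exact (hstab n i l hl).symm
  have hfinal : ∀ i, (b - Lop p k m A w) i = 0 := by
    intro i
    apply WittVector.ext
    intro l
    rw [WittVector.zero_coeff]
    set n := l + 1 with hn
    have htr : ∀ j, WittVector.truncate n (w j) = WittVector.truncate n (v n j) := by
      intro j
      apply TruncatedWittVector.ext
      intro i0
      rw [WittVector.coeff_truncate, WittVector.coeff_truncate]
      exact hwv n j i0 i0.2
    have htrf : ∀ j, WittVector.truncate n (WittVector.frobenius (w j))
        = WittVector.truncate n (WittVector.frobenius (v n j)) := by
      intro j
      apply TruncatedWittVector.ext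
      intro i0
      rw [WittVector.coeff_truncate, WittVector.coeff_truncate,
        WittVector.coeff_frobenius_charP, WittVector.coeff_frobenius_charP,
        hwv n j i0 i0.2]
    have hLtr : WittVector.truncate n (Lop p k m A w i)
        = WittVector.truncate n (Lop p k m A (v n) i) := by
      unfold Lop
      simp only [Pi.sub_apply]
      rw [map_sub, map_sub, htr i]
      congr 1
      rw [mulVec_eq_sum, mulVec_eq_sum, map_sum, map_sum]
      exact Finset.sum_congr rfl fun j _ => by rw [map_mul, map_mul, htrf j]
    have hco : ((b - Lop p k m A w) i).coeff l = ((b - Lop p k m A (v n)) i).coeff l := by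
      have h1 : WittVector.truncate n ((b - Lop p k m A w) i)
          = WittVector.truncate n ((b - Lop p k m A (v n)) i) := by
        simp only [Pi.sub_apply]
        rw [map_sub, map_sub, hLtr]
      have h2 := congrArg (fun t => TruncatedWittVector.coeff (⟨l, by omega⟩ : Fin n) t) h1
      simpa only [WittVector.coeff_truncate] using h2
    rw [hco]
    exact E n i l (by omega)
  refine ⟨w, ?_⟩
  funext i
  have h3 := hfinal i
  simp only [Pi.sub_apply] at h3
  exact (sub_eq_zero.mp h3).symm

end Stmt4Aux

/-- over the Witt vectors of an algebraically closed field of characteristic `p`,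
the semilinear map `v ↦ v - A·σ(v)` is surjective. -/
theorem stmt_4 (p : ℕ) [Fact p.Prime] (k : Type) [Field k] [IsAlgClosed k] [CharP k p]
    (m : ℕ) (hm : 1 ≤ m) (A : Matrix (Fin m) (Fin m) (WittVector p k)) :
    Function.Surjective
      (fun v : Fin m → WittVector p k =>
        v - A.mulVec fun i => WittVector.frobenius (v i)) := by
  intro b
  obtain ⟨v, hv⟩ := Stmt4Aux.main_solve p k m A b
  exact ⟨v, hv⟩
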